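/- Let T be a tree on t vertices, and let G be an n-vertex K_{s,s}-free graph that is K-almost-regular (i.e., Δ(G) ≤ K·δ(G)) with average degree d = 2e(G)/n ≥ (4Kt)^{6s}·s³. Then the number of labeled induced copies of T in G is at least n·(d/(2K))^{t-1}. -/

import Mathlib

open SimpleGraph

/-- `G` contains no (not necessarily induced) subgraph isomorphic to `K_{s,s}`. -/
def KssFree {V : Type*} (s : ℕ) (G : SimpleGraph V) : Prop :=
  ∀ f : completeBipartiteGraph (Fin s) (Fin s) →g G, ¬ Function.Injective f

open Finset

section Aux


variable {t : ℕ}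

lemma dist_lt_of_mem_shortest {T : SimpleGraph (Fin t)} (r v : Fin t)
    (P : T.Walk r v) (hP : P.length = T.dist r v) :
    ∀ x, (hx : x ∈ P.support) → x ≠ v → T.dist r x < T.dist r v := by
  intro x hx hxv
  have hspec := P.take_spec hx
  have hlen : (P.takeUntil x hx).length + (P.dropUntil x hx).length = P.length := by
    conv_rhs => rw [← hspec]
    rw [SimpleGraph.Walk.length_append]
  have hdrop : 1 ≤ (P.dropUntil x hx).length := by
    rcases Nat.eq_zero_or_pos (P.dropUntil x hx).length with h0 | h1
    · exact absurd (SimpleGraph.Walk.eq_of_length_eq_zero h0) hxv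
    · exact h1
  have h1 : T.dist r x ≤ (P.takeUntil x hx).length := SimpleGraph.dist_le _
  omega

lemma tree_order {t : ℕ} (T : SimpleGraph (Fin t)) (hT : T.IsTree) :
    ∃ σ : Fin t ≃ Fin t, ∀ k : Fin t, 0 < (k : ℕ) →
      ∃ p : Fin t, p < k ∧ ∀ j : Fin t, j < k → (T.Adj (σ j) (σ k) ↔ j = p) := by
  have hc : T.Connected := hT.isConnected
  have hne : Nonempty (Fin t) := hc.nonempty
  set r : Fin t := Classical.arbitrary (Fin t) with hr
  -- adjacent vertices have different distances from r
  have hadj_ne : ∀ u v : Fin t, T.Adj u v → T.dist r u ≠ T.dist r v := by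
    intro u v ha he
    obtain ⟨P, hPp, hPl⟩ := hc.exists_path_of_dist r u
    have hvP : v ∉ P.support := by
      intro hv
      have := dist_lt_of_mem_shortest r u P hPl v hv ha.ne'
      omega
    have hQp : (P.concat ha).IsPath := by
      rw [SimpleGraph.Walk.isPath_def, SimpleGraph.Walk.support_concat,
        List.nodup_append]
      refine ⟨hPp.support_nodup, List.nodup_singleton v, ?_⟩
      intro a haP b hav hab
      rw [List.mem_singleton] at hav
      exact hvP (hav ▸ hab ▸ haP)
    obtain ⟨R, hRp, hRl⟩ := hc.exists_path_of_dist r v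
    have := (hT.existsUnique_path r v).unique hQp hRp
    have hlen : (P.concat ha).length = R.length := by rw [this]
    rw [SimpleGraph.Walk.length_concat, hPl, hRl] at hlen
    omega
  -- unique parent
  have hparent : ∀ v : Fin t, v ≠ r → ∃! u : Fin t,
      T.Adj u v ∧ T.dist r u + 1 = T.dist r v := by
    intro v hv
    have hdpos : 0 < T.dist r v := hc.pos_dist_of_ne (Ne.symm hv)
    obtain ⟨P, hPp, hPl⟩ := hc.exists_path_of_dist r v
    have hex : ∃ (u : Fin t) (q : T.Walk r u) (h' : T.Adj u v), P = q.concat h' := by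
      cases P with
      | nil => simp at hPl; omega
      | cons h p =>
        obtain ⟨x, q, h', he⟩ := SimpleGraph.Walk.exists_cons_eq_concat h p
        exact ⟨x, q, h', he⟩
    obtain ⟨u, q, h', hPe⟩ := hex
    have hqlen : q.length + 1 = T.dist r v := by
      rw [← hPl, hPe, SimpleGraph.Walk.length_concat]
    have hdu : T.dist r u + 1 = T.dist r v := by
      have h1 : T.dist r u ≤ q.length := SimpleGraph.dist_le _
      have h2 : T.dist r v ≤ T.dist r u + T.dist u v := hc.dist_triangle
      have h3 : T.dist u v = 1 := SimpleGraph.dist_eq_one_iff_adj.mpr h'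
      omega
    refine ⟨u, ⟨h', hdu⟩, ?_⟩
    intro u' ⟨ha', hd'⟩
    -- both give paths r → v via concat; uniqueness of path
    have key : ∀ (w : Fin t), T.Adj w v → T.dist r w + 1 = T.dist r v →
        ∃ (Q : T.Walk r w) (hQ : T.Adj w v), Q.IsPath ∧ (Q.concat hQ).IsPath := by
      intro w hw hdw
      obtain ⟨Q, hQp, hQl⟩ := hc.exists_path_of_dist r w
      have hvQ : v ∉ Q.support := by
        intro hv'
        have hne' : v ≠ w := hw.ne'
        have := dist_lt_of_mem_shortest r w Q hQl v hv' hne'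
        omega
      refine ⟨Q, hw, hQp, ?_⟩
      rw [SimpleGraph.Walk.isPath_def, SimpleGraph.Walk.support_concat,
        List.nodup_append]
      refine ⟨hQp.support_nodup, List.nodup_singleton v, ?_⟩
      intro a haQ b hav hab
      rw [List.mem_singleton] at hav
      exact hvQ (hav ▸ hab ▸ haQ)
    obtain ⟨Q1, hQ1a, _, hQ1c⟩ := key u' ha' hd'
    obtain ⟨Q2, hQ2a, _, hQ2c⟩ := key u h' hdu
    have := (hT.existsUnique_path r v).unique hQ1c hQ2c
    obtain ⟨hv', -⟩ := SimpleGraph.Walk.concat_inj this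
    exact hv'
  have ht : 0 < t := Fin.pos_iff_nonempty.mpr hne
  set key : Fin t → ℕ := fun v => T.dist r v * t + v.val with hkey
  have hkeyinj : Function.Injective key := by
    intro a b hab
    have ha := a.isLt
    have hb := b.isLt
    have : a.val = b.val := by
      simp only [hkey] at hab
      rcases Nat.lt_trichotomy (T.dist r a) (T.dist r b) with h|h|h
      · have h2 : T.dist r a * t + t ≤ T.dist r b * t := by
          have := Nat.mul_le_mul_right t h
          rw [Nat.succ_mul] at this
          omega
        omega
      · rw [h] at hab; omega
      · have h2 : T.dist r b * t + t ≤ T.dist r a * t := by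
          have := Nat.mul_le_mul_right t h
          rw [Nat.succ_mul] at this
          omega
        omega
    exact Fin.ext this
  set σ : Equiv.Perm (Fin t) := Tuple.sort key with hσ
  have hsm : StrictMono (key ∘ σ) :=
    (Tuple.monotone_sort key).strictMono_of_injective (hkeyinj.comp σ.injective)
  have hlt_iff : ∀ a b : Fin t, a < b ↔ key (σ a) < key (σ b) := fun a b => (hsm.lt_iff_lt).symm
  have hkey_dist_lt : ∀ a b : Fin t, T.dist r a < T.dist r b → key a < key b := by
    intro a b h
    have h2 : T.dist r a * t + t ≤ T.dist r b * t := by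
      have := Nat.mul_le_mul_right t h
      rw [Nat.succ_mul] at this
      omega
    have := a.isLt
    simp only [hkey]
    omega
  have hdist_le : ∀ a b : Fin t, key a < key b → T.dist r a ≤ T.dist r b := by
    intro a b h
    by_contra hcon
    exact absurd (hkey_dist_lt b a (by omega)) (by omega)
  refine ⟨σ, ?_⟩
  intro k hk
  have hvr : σ k ≠ r := by
    intro hvr
    have h0k : (⟨0, ht⟩ : Fin t) < k := by
      rw [Fin.lt_def]; exact hk
    have hne0 : σ ⟨0, ht⟩ ≠ r := by
      rw [← hvr]; exact fun h => absurd (σ.injective h) (Fin.ne_of_lt h0k)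
    have h1 : 1 ≤ T.dist r (σ ⟨0, ht⟩) := by
      rcases Nat.eq_zero_or_pos (T.dist r (σ ⟨0, ht⟩)) with h0 | h1
      · exact absurd (hc.dist_eq_zero_iff.mp h0).symm hne0
      · exact h1
    have h2 : key (σ ⟨0, ht⟩) < key (σ k) := (hlt_iff _ _).mp h0k
    have h3 : T.dist r r = 0 := by simp
    have h4 : key r < t := by simp only [hkey, h3]; simpa using r.isLt
    have h5 : t ≤ key (σ ⟨0, ht⟩) := by
      simp only [hkey]
      calc t = 1 * t := (one_mul t).symm
      _ ≤ T.dist r (σ ⟨0, ht⟩) * t := Nat.mul_le_mul_right t h1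
      _ ≤ _ := Nat.le_add_right _ _
    rw [hvr] at h2
    omega
  obtain ⟨u, ⟨hu_adj, hu_dist⟩, huniq⟩ := hparent (σ k) hvr
  refine ⟨σ.symm u, ?_, ?_⟩
  · rw [hlt_iff, Equiv.apply_symm_apply]
    exact hkey_dist_lt u (σ k) (by omega)
  · intro j hj
    constructor
    · intro hja
      have h1 : key (σ j) < key (σ k) := (hlt_iff _ _).mp hj
      have h2 : T.dist r (σ j) ≤ T.dist r (σ k) := hdist_le _ _ h1
      have h3 : T.dist r (σ j) ≠ T.dist r (σ k) := hadj_ne _ _ hja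
      have h4 : T.dist r (σ k) ≤ T.dist r (σ j) + T.dist (σ j) (σ k) := hc.dist_triangle
      have h5 : T.dist (σ j) (σ k) = 1 := SimpleGraph.dist_eq_one_iff_adj.mpr hja
      have h6 : T.dist r (σ j) + 1 = T.dist r (σ k) := by omega
      have := huniq (σ j) ⟨hja, h6⟩
      rw [← this, Equiv.symm_apply_apply]
    · intro hjp
      rw [hjp, Equiv.apply_symm_apply]
      exact hu_adj



variable {V : Type*} [Fintype V] [DecidableEq V]


lemma kss_filter_card (G : SimpleGraph V) [DecidableRel G.Adj] {s : ℕ} (hs : 1 ≤ s)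
    (hfree : KssFree s G) (S : Finset V) (hS : S.card = s) :
    (univ.filter fun z => S ⊆ G.neighborFinset z).card ≤ s - 1 := by
  by_contra hcon
  push_neg at hcon
  have hcard : s ≤ (univ.filter fun z => S ⊆ G.neighborFinset z).card := by omega
  obtain ⟨Z, hZsub, hZcard⟩ := Finset.exists_subset_card_eq hcard
  have eS : Fin s ≃ ↥S := (Fintype.equivFinOfCardEq (by rw [Fintype.card_coe, hS])).symm
  have eZ : Fin s ≃ ↥Z := (Fintype.equivFinOfCardEq (by rw [Fintype.card_coe, hZcard])).symm
  have hZprop : ∀ z ∈ Z, S ⊆ G.neighborFinset z := by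
    intro z hz
    have := hZsub hz
    simp only [mem_filter] at this
    exact this.2
  -- an element of Z is never in S
  have hdisj : ∀ z ∈ Z, z ∉ S := by
    intro z hz hzS
    have := hZprop z hz hzS
    rw [mem_neighborFinset] at this
    exact G.irrefl this
  have hAdj : ∀ (a b : Fin s), G.Adj ((eS a : V)) ((eZ b : V)) := by
    intro a b
    have h1 : ((eS a : V)) ∈ S := (eS a).2
    have h2 := hZprop (eZ b : V) (eZ b).2 h1
    rw [mem_neighborFinset] at h2
    exact h2.symm
  let f : completeBipartiteGraph (Fin s) (Fin s) →g G :=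
    { toFun := Sum.elim (fun a => (eS a : V)) (fun b => (eZ b : V)),
      map_rel' := by
        rintro (a | a) (b | b) hab
        · simp [completeBipartiteGraph] at hab
        · exact hAdj a b
        · exact (hAdj b a).symm
        · simp [completeBipartiteGraph] at hab }
  refine hfree f ?_
  have hfl : ∀ a : Fin s, f (Sum.inl a) = (eS a : V) := fun a => rfl
  have hfr : ∀ b : Fin s, f (Sum.inr b) = (eZ b : V) := fun b => rfl
  rintro (a | a) (b | b) hab
  · rw [hfl, hfl] at hab
    exact congrArg Sum.inl (eS.injective (Subtype.ext hab))
  · rw [hfl, hfr] at hab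
    exact absurd ((eS a).2) (by rw [hab]; exact hdisj _ (eZ b).2)
  · rw [hfr, hfl] at hab
    exact absurd ((eS b).2) (by rw [← hab]; exact hdisj _ (eZ a).2)
  · rw [hfr, hfr] at hab
    exact congrArg Sum.inr (eZ.injective (Subtype.ext hab))



lemma bad_card (G : SimpleGraph V) [DecidableRel G.Adj] {s : ℕ} (hs : 1 ≤ s)
    (hfree : KssFree s G) (m : ℕ) (u : V) :
    (univ.filter fun z => m ≤ (G.neighborFinset z ∩ G.neighborFinset u).card).card
      * (m + 1 - s) ^ s ≤ s * (G.degree u) ^ s := by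
  set B := univ.filter fun z => m ≤ (G.neighborFinset z ∩ G.neighborFinset u).card with hB
  set pows := (G.neighborFinset u).powersetCard s with hpows
  have key1 : ∀ z ∈ B, m.choose s ≤ (pows.filter (fun S => S ⊆ G.neighborFinset z)).card := by
    intro z hz
    have hz' : m ≤ (G.neighborFinset z ∩ G.neighborFinset u).card := by
      simp only [hB, mem_filter] at hz; exact hz.2
    have heq : pows.filter (fun S => S ⊆ G.neighborFinset z)
        = (G.neighborFinset z ∩ G.neighborFinset u).powersetCard s := by
      ext S
      simp only [hpows, mem_filter, mem_powersetCard, subset_inter_iff]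
      tauto
    rw [heq, card_powersetCard]
    exact Nat.choose_le_choose s hz'
  have hdouble : B.card * m.choose s
      ≤ ∑ z ∈ B, (pows.filter (fun S => S ⊆ G.neighborFinset z)).card := by
    calc B.card * m.choose s = ∑ _z ∈ B, m.choose s := by rw [Finset.sum_const, smul_eq_mul]
    _ ≤ _ := Finset.sum_le_sum key1
  have hswap : ∑ z ∈ B, (pows.filter (fun S => S ⊆ G.neighborFinset z)).card
      = ∑ S ∈ pows, (B.filter (fun z => S ⊆ G.neighborFinset z)).card := by
    simp only [Finset.card_filter]
    exact Finset.sum_comm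
  have hSbd : ∀ S ∈ pows, (B.filter (fun z => S ⊆ G.neighborFinset z)).card ≤ s - 1 := by
    intro S hS
    have hc : S.card = s := (mem_powersetCard.mp hS).2
    calc (B.filter (fun z => S ⊆ G.neighborFinset z)).card
        ≤ (univ.filter (fun z => S ⊆ G.neighborFinset z)).card := by
          apply Finset.card_le_card
          intro z hz
          simp only [mem_filter] at hz ⊢
          exact ⟨mem_univ z, hz.2⟩
    _ ≤ s - 1 := kss_filter_card G hs hfree S hc
  have hmain : B.card * m.choose s ≤ (G.degree u).choose s * (s - 1) := by
    calc B.card * m.choose s ≤ _ := hdouble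
    _ = _ := hswap
    _ ≤ ∑ _S ∈ pows, (s - 1) := Finset.sum_le_sum hSbd
    _ = pows.card * (s - 1) := by rw [Finset.sum_const, smul_eq_mul]
    _ = (G.degree u).choose s * (s - 1) := by
        rw [hpows, card_powersetCard, SimpleGraph.card_neighborFinset_eq_degree]
  calc B.card * (m + 1 - s) ^ s
      ≤ B.card * m.descFactorial s :=
        Nat.mul_le_mul_left _ (Nat.pow_sub_le_descFactorial m s)
  _ = B.card * (s.factorial * m.choose s) := by rw [Nat.descFactorial_eq_factorial_mul_choose]
  _ = s.factorial * (B.card * m.choose s) := by ring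
  _ ≤ s.factorial * ((G.degree u).choose s * (s - 1)) := Nat.mul_le_mul_left _ hmain
  _ = (s - 1) * (s.factorial * (G.degree u).choose s) := by ring
  _ = (s - 1) * (G.degree u).descFactorial s := by
        rw [Nat.descFactorial_eq_factorial_mul_choose]
  _ ≤ (s - 1) * (G.degree u) ^ s :=
        Nat.mul_le_mul_left _ (Nat.descFactorial_le_pow _ _)
  _ ≤ s * (G.degree u) ^ s := Nat.mul_le_mul_right _ (by omega)


/-- the set of vertices having large common neighborhood with `u` -/
def badF (G : SimpleGraph V) [DecidableRel G.Adj] (m : ℕ) (u : V) : Finset V :=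
  univ.filter fun z => m ≤ (G.neighborFinset z ∩ G.neighborFinset u).card

/-- partial induced embeddings with pairwise small codegree -/
def ok {t : ℕ} (G : SimpleGraph V) [DecidableRel G.Adj] (T : SimpleGraph (Fin t))
    (σ : Fin t ≃ Fin t) (m : ℕ) (k : ℕ) (hk : k ≤ t) (f : Fin k → V) : Prop :=
  Function.Injective f ∧
  (∀ i j : Fin k, G.Adj (f i) (f j) ↔ T.Adj (σ (i.castLE hk)) (σ (j.castLE hk))) ∧
  (∀ i j : Fin k, i ≠ j → (G.neighborFinset (f i) ∩ G.neighborFinset (f j)).card < m)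

noncomputable def okset {t : ℕ} (G : SimpleGraph V) [DecidableRel G.Adj]
    (T : SimpleGraph (Fin t)) (σ : Fin t ≃ Fin t) (m : ℕ) (k : ℕ) (hk : k ≤ t) :
    Finset (Fin k → V) :=
  @Finset.filter _ (ok G T σ m k hk) (Classical.decPred _) univ

lemma mem_okset {t : ℕ} {G : SimpleGraph V} [DecidableRel G.Adj] {T : SimpleGraph (Fin t)}
    {σ : Fin t ≃ Fin t} {m k : ℕ} {hk : k ≤ t} {f : Fin k → V} :
    f ∈ okset G T σ m k hk ↔ ok G T σ m k hk f := by
  unfold okset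
  exact (@Finset.mem_filter _ _ (Classical.decPred _) _ _).trans
    ⟨fun h => h.2, fun h => ⟨mem_univ _, h⟩⟩

lemma greedy {t : ℕ} (G : SimpleGraph V) [DecidableRel G.Adj] (T : SimpleGraph (Fin t))
    (σ : Fin t ≃ Fin t)
    (hσ : ∀ k : Fin t, 0 < (k : ℕ) →
      ∃ p : Fin t, p < k ∧ ∀ j : Fin t, j < k → (T.Adj (σ j) (σ k) ↔ j = p))
    (m : ℕ) (Br c : ℝ) (hc : 0 ≤ c)
    (hBr : ∀ u : V, ((badF G m u).card : ℝ) ≤ Br)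
    (hdeg : ∀ v : V, (t : ℝ) + t * m + t * Br + c ≤ G.degree v) :
    ∀ k, 1 ≤ k → (hk : k ≤ t) →
      (Fintype.card V : ℝ) * c ^ (k - 1) ≤ ((okset G T σ m k hk).card : ℝ) := by
  intro k
  induction k with
  | zero => omega
  | succ k ih =>
    intro _ hk1
    rcases Nat.eq_zero_or_pos k with rfl | hkpos
    · -- base case : k + 1 = 1
      have : okset G T σ m 1 hk1 = univ := by
        apply Finset.eq_univ_of_forall
        intro f
        apply mem_okset.mpr
        refine ⟨?_, ?_, ?_⟩
        · intro i j _; exact Subsingleton.elim i j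
        · intro i j
          have : i = j := Subsingleton.elim i j
          subst this
          exact iff_of_false (G.irrefl) (T.irrefl)
        · intro i j hij; exact absurd (Subsingleton.elim i j) hij
      rw [this]
      simp only [Finset.card_univ, Fintype.card_fun, Fintype.card_fin, pow_one]
      norm_num
    -- inductive step
    have hk : k ≤ t := by omega
    have hstep : ((okset G T σ m k hk).card : ℝ) * c
        ≤ ((okset G T σ m (k+1) hk1).card : ℝ) := by
      -- the new vertex and its parent
      set kT : Fin t := ⟨k, by omega⟩ with hkT
      obtain ⟨p, hpk, hpuniq⟩ := hσ kT hkpos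
      have hpv : (p : ℕ) < k := hpk
      set pL : Fin k := ⟨p.val, hpv⟩ with hpL
      -- the choice set
      set Ch : (Fin k → V) → Finset V := fun f =>
        G.neighborFinset (f pL) \
          ((univ.image f ∪
            univ.biUnion (fun i : Fin k => if i = pL then ∅ else
              G.neighborFinset (f i) ∩ G.neighborFinset (f pL))) ∪
            univ.biUnion (fun i : Fin k => badF G m (f i))) with hCh
      -- extension property
      have hext : ∀ f ∈ okset G T σ m k hk, ∀ y ∈ Ch f,
          Fin.snoc f y ∈ okset G T σ m (k+1) hk1 := by
        intro f hf y hy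
        obtain ⟨hinj, hadjf, hcod⟩ := mem_okset.mp hf
        simp only [hCh, Finset.mem_sdiff, Finset.mem_union, Finset.mem_image,
          Finset.mem_biUnion, mem_neighborFinset] at hy
        push_neg at hy
        obtain ⟨hyadj, ⟨hyim, hyb1⟩, hyb2⟩ := hy
        have hsnoc_cast : ∀ i : Fin k, (Fin.snoc f y : Fin (k+1) → V) (Fin.castSucc i) = f i :=
          fun i => by simp
        have hsnoc_last : (Fin.snoc f y : Fin (k+1) → V) (Fin.last k) = y := by simp
        have hyim' : ∀ i : Fin k, f i ≠ y := by
          intro i h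
          exact (hyim i (mem_univ i) h).elim
        -- y not adjacent to f i for i ≠ pL
        have hynadj : ∀ i : Fin k, i ≠ pL → ¬ G.Adj (f i) y := by
          intro i hipL hadj
          refine hyb1 i (mem_univ i) ?_
          rw [if_neg hipL, Finset.mem_inter, mem_neighborFinset, mem_neighborFinset]
          exact ⟨hadj, hyadj⟩
        -- small codegree of y with each f i
        have hycod : ∀ i : Fin k, (G.neighborFinset y ∩ G.neighborFinset (f i)).card < m := by
          intro i
          have := hyb2 i (mem_univ i)
          simp only [badF, Finset.mem_filter, mem_univ, true_and, not_le] at this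
          exact this
        apply mem_okset.mpr
        refine ⟨?_, ?_, ?_⟩
        · -- injectivity
          intro i j hij
          induction i using Fin.lastCases with
          | last =>
            induction j using Fin.lastCases with
            | last => rfl
            | cast j =>
              rw [hsnoc_last, hsnoc_cast] at hij
              exact absurd hij.symm (hyim' j)
          | cast i =>
            induction j using Fin.lastCases with
            | last =>
              rw [hsnoc_last, hsnoc_cast] at hij
              exact absurd hij (hyim' i)
            | cast j =>
              rw [hsnoc_cast, hsnoc_cast] at hij
              exact congrArg Fin.castSucc (hinj hij)
        · -- induced adjacency
          intro i j
          have hcastlast : (Fin.last k).castLE hk1 = kT := rfl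
          have hcastcast : ∀ i : Fin k, (Fin.castSucc i).castLE hk1 = i.castLE hk := by
            intro i; rfl
          have hlt : ∀ i : Fin k, (i.castLE hk : Fin t) < kT := by
            intro i
            rw [Fin.lt_def]
            exact i.isLt
          have hmain : ∀ i : Fin k,
              (G.Adj (f i) y ↔ T.Adj (σ (i.castLE hk)) (σ kT)) := by
            intro i
            rw [hpuniq (i.castLE hk) (hlt i)]
            by_cases hip : i = pL
            · subst hip
              simp only [Fin.ext_iff]
              constructor
              · intro _; rfl
              · intro _
                rw [← mem_neighborFinset] at hyadj ⊢
                exact hyadj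
            · have : (i.castLE hk : Fin t) ≠ p := by
                intro h
                apply hip
                apply Fin.ext
                have : ((i.castLE hk : Fin t) : ℕ) = (p : ℕ) := by rw [h]
                simpa using this
              exact iff_of_false (hynadj i hip) (by simpa using this)
          induction i using Fin.lastCases with
          | last =>
            induction j using Fin.lastCases with
            | last =>
              rw [hsnoc_last]
              exact iff_of_false (G.irrefl) (T.irrefl)
            | cast j =>
              rw [hsnoc_last, hsnoc_cast, hcastlast, hcastcast, G.adj_comm, T.adj_comm]
              exact hmain j
          | cast i =>
            induction j using Fin.lastCases with
            | last =>
              rw [hsnoc_last, hsnoc_cast, hcastlast, hcastcast]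
              exact hmain i
            | cast j =>
              rw [hsnoc_cast, hsnoc_cast, hcastcast, hcastcast]
              exact hadjf i j
        · -- codegree
          intro i j hij
          induction i using Fin.lastCases with
          | last =>
            induction j using Fin.lastCases with
            | last => exact absurd rfl hij
            | cast j =>
              rw [hsnoc_last, hsnoc_cast]
              exact hycod j
          | cast i =>
            induction j using Fin.lastCases with
            | last =>
              rw [hsnoc_last, hsnoc_cast]
              rw [Finset.inter_comm]
              exact hycod i
            | cast j =>
              rw [hsnoc_cast, hsnoc_cast]
              exact hcod i j (fun h => hij (congrArg Fin.castSucc h))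
      -- cardinality of the choice set
      have hcard : ∀ f ∈ okset G T σ m k hk, c ≤ ((Ch f).card : ℝ) := by
        intro f hf
        obtain ⟨hinj, hadjf, hcod⟩ := mem_okset.mp hf
        have h1 : ((univ.image f).card : ℝ) ≤ t := by
          calc ((univ.image f).card : ℝ) ≤ ((univ : Finset (Fin k)).card : ℝ) := by
                exact_mod_cast Finset.card_image_le
          _ = k := by rw [Finset.card_univ, Fintype.card_fin]
          _ ≤ t := by exact_mod_cast hk
        have h2 : ((univ.biUnion (fun i : Fin k => if i = pL then ∅ else
              G.neighborFinset (f i) ∩ G.neighborFinset (f pL))).card : ℝ) ≤ t * m := by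
          calc ((univ.biUnion _).card : ℝ)
              ≤ ((∑ i : Fin k, (if i = pL then (∅ : Finset V) else
                G.neighborFinset (f i) ∩ G.neighborFinset (f pL)).card : ℕ) : ℝ) := by
                exact_mod_cast Finset.card_biUnion_le
          _ ≤ ∑ _i : Fin k, (m : ℝ) := by
              push_cast
              apply Finset.sum_le_sum
              intro i _
              by_cases hip : i = pL
              · simp [hip]
              · rw [if_neg hip]
                have := hcod i pL hip
                exact_mod_cast this.le
          _ = (k : ℝ) * m := by rw [Finset.sum_const]; simp [mul_comm]
          _ ≤ t * m := by
              apply mul_le_mul_of_nonneg_right _ (Nat.cast_nonneg m)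
              exact_mod_cast hk
        have h3 : ((univ.biUnion (fun i : Fin k => badF G m (f i))).card : ℝ) ≤ t * Br := by
          have hBr0 : 0 ≤ Br := le_trans (Nat.cast_nonneg _) (hBr (f pL))
          calc ((univ.biUnion _).card : ℝ)
              ≤ ((∑ i : Fin k, (badF G m (f i)).card : ℕ) : ℝ) := by
                exact_mod_cast Finset.card_biUnion_le
          _ = ∑ i : Fin k, ((badF G m (f i)).card : ℝ) := by push_cast; ring
          _ ≤ ∑ _i : Fin k, Br := Finset.sum_le_sum (fun i _ => hBr (f i))
          _ = (k : ℝ) * Br := by rw [Finset.sum_const]; simp [mul_comm]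
          _ ≤ t * Br := by
              apply mul_le_mul_of_nonneg_right _ hBr0
              exact_mod_cast hk
        have hdeglb : ((G.degree (f pL) : ℝ)) ≤ ((Ch f).card : ℝ) + (t + t * m + t * Br) := by
          set E1 := univ.image f with hE1
          set E2 := univ.biUnion (fun i : Fin k => if i = pL then ∅ else
            G.neighborFinset (f i) ∩ G.neighborFinset (f pL)) with hE2
          set E3 := univ.biUnion (fun i : Fin k => badF G m (f i)) with hE3
          have hsub : (G.neighborFinset (f pL)).card ≤ (Ch f).card + ((E1 ∪ E2) ∪ E3).card := by
            rw [hCh]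
            exact Finset.card_le_card_sdiff_add_card
          have hun : ((E1 ∪ E2) ∪ E3).card ≤ E1.card + E2.card + E3.card := by
            calc ((E1 ∪ E2) ∪ E3).card ≤ (E1 ∪ E2).card + E3.card := Finset.card_union_le _ _
            _ ≤ E1.card + E2.card + E3.card :=
                Nat.add_le_add_right (Finset.card_union_le _ _) _
          rw [← SimpleGraph.card_neighborFinset_eq_degree]
          have hc1 : ((G.neighborFinset (f pL)).card : ℝ)
              ≤ ((Ch f).card : ℝ) + (((E1.card + E2.card + E3.card : ℕ)) : ℝ) := by
            exact_mod_cast le_trans hsub (Nat.add_le_add_left hun _)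
          have : (((E1.card + E2.card + E3.card : ℕ)) : ℝ) ≤ t + t * m + t * Br := by
            push_cast
            linarith [h1, h2, h3]
          linarith
        have := hdeg (f pL)
        linarith
      -- assembling
      set F : (Fin k → V) → Finset (Fin (k+1) → V) :=
        fun f => (Ch f).image (fun y => Fin.snoc f y) with hF
      have hsub : (okset G T σ m k hk).biUnion F ⊆ okset G T σ m (k+1) hk1 := by
        intro g hg
        rw [Finset.mem_biUnion] at hg
        obtain ⟨f, hf, hg⟩ := hg
        rw [Finset.mem_image] at hg
        obtain ⟨y, hy, rfl⟩ := hg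
        exact hext f hf y hy
      have hdisj : ∀ f1 ∈ okset G T σ m k hk, ∀ f2 ∈ okset G T σ m k hk, f1 ≠ f2 →
          Disjoint (F f1) (F f2) := by
        intro f1 _ f2 _ hne
        rw [Finset.disjoint_left]
        intro g hg1 hg2
        rw [Finset.mem_image] at hg1 hg2
        obtain ⟨y1, _, he1⟩ := hg1
        obtain ⟨y2, _, he2⟩ := hg2
        apply hne
        have h1 : Fin.init g = f1 := by rw [← he1]; simp
        have h2 : Fin.init g = f2 := by rw [← he2]; simp
        rw [← h1, ← h2]
      have himcard : ∀ f : Fin k → V, (F f).card = (Ch f).card := by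
        intro f
        apply Finset.card_image_of_injOn
        intro y1 _ y2 _ he
        have := congrArg (fun g => g (Fin.last k)) he
        simpa [Fin.snoc_last] using this
      calc ((okset G T σ m k hk).card : ℝ) * c
          = ∑ _f ∈ okset G T σ m k hk, c := by rw [Finset.sum_const]; simp [mul_comm]
      _ ≤ ∑ f ∈ okset G T σ m k hk, ((Ch f).card : ℝ) := Finset.sum_le_sum hcard
      _ = ((∑ f ∈ okset G T σ m k hk, (Ch f).card : ℕ) : ℝ) := by push_cast; ring
      _ = ((∑ f ∈ okset G T σ m k hk, (F f).card : ℕ) : ℝ) := by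
          norm_cast
          exact (Finset.sum_congr rfl (fun f _ => (himcard f).symm))
      _ = ((((okset G T σ m k hk).biUnion F).card : ℕ) : ℝ) := by
          norm_cast
          exact (Finset.card_biUnion hdisj).symm
      _ ≤ ((okset G T σ m (k+1) hk1).card : ℝ) := by
          exact_mod_cast Finset.card_le_card hsub
    -- combine with induction hypothesis
    have hih := ih hkpos hk
    have hcpow : (Fintype.card V : ℝ) * c ^ (k + 1 - 1)
        ≤ ((okset G T σ m k hk).card : ℝ) * c := by
      have : c ^ (k + 1 - 1) = c ^ (k - 1) * c := by
        rw [← pow_succ]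
        congr 1
        omega
      rw [this, ← mul_assoc]
      exact mul_le_mul_of_nonneg_right hih hc
    exact le_trans hcpow hstep


set_option maxHeartbeats 1000000 in
lemma arith_main {s t : ℕ} {K d : ℝ} (hs : 2 ≤ s) (ht : 1 ≤ t) (hK : 1 < K)
    (hd2 : (4 * K * t) ^ (6 * s) * s ^ 3 ≤ d) :
    0 < d ∧ 4 * (s : ℝ) ≤ d / (4 * K * t) ∧
      (t : ℝ) + t * (d / (4 * K * t)) + t * (s * (16 * K ^ 2 * t) ^ s) + d / (2 * K) ≤ d / K := by
  have hK0 : (0:ℝ) < K := by linarith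
  have ht1 : (1:ℝ) ≤ t := by exact_mod_cast ht
  have hs2 : (2:ℝ) ≤ s := by exact_mod_cast hs
  have hA4 : (4:ℝ) ≤ 4 * K * t := by nlinarith
  have hA1 : (1:ℝ) ≤ 4 * K * t := by linarith
  have hA0 : (0:ℝ) < 4 * K * t := by linarith
  have hs0 : (0:ℝ) < s := by linarith
  -- A^2 ≤ A^(6s)
  have hpow2 : (4*K*t) ^ 2 ≤ (4*K*t) ^ (6*s) := pow_le_pow_right₀ hA1 (by omega)
  have hd0 : 0 < d := by
    have : (0:ℝ) < (4*K*t) ^ (6*s) * s^3 := by positivity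
    linarith
  constructor
  · exact hd0
  have hcq : 4 * (s:ℝ) ≤ d / (4*K*t) := by
    rw [le_div_iff₀ hA0]
    have hs4 : (4:ℝ) ≤ (s:ℝ)^2 := by nlinarith
    have h0 : (4:ℝ) ≤ (s:ℝ)^2 * (4*K*t) := by nlinarith
    have h1 : 4 * (s:ℝ) * (4*K*t) ≤ (s:ℝ)^3 * (4*K*t)^2 := by
      have h01 := mul_le_mul_of_nonneg_left h0 (le_of_lt (mul_pos hs0 hA0))
      nlinarith [h01]
    have h2 : (s:ℝ)^3 * (4*K*t)^2 ≤ (4*K*t)^(6*s) * s^3 := by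
      have h02 := mul_le_mul_of_nonneg_left hpow2 (pow_nonneg hs0.le 3)
      nlinarith [h02]
    linarith
  refine ⟨hcq, ?_⟩
  -- main estimate
  have hB1 : (1:ℝ) ≤ (16*K^2*t) ^ s := by
    have := pow_le_pow_left₀ (by norm_num : (0:ℝ) ≤ 1)
      (show (1:ℝ) ≤ 16*K^2*t by nlinarith) s
    simpa using this
  have key : 4 * K * ((t:ℝ) + t * (s * (16*K^2*t)^s)) ≤ d := by
    have e1 : (t:ℝ) + t * (s * (16*K^2*t)^s) ≤ 2 * t * (s * (16*K^2*t)^s) := by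
      have hsB : (1:ℝ) ≤ (s:ℝ) * (16*K^2*t)^s := by nlinarith
      have := mul_le_mul_of_nonneg_left hsB (by linarith : (0:ℝ) ≤ (t:ℝ))
      nlinarith [this]
    have e2 : (16*K^2*t)^s ≤ (4*K*t)^(2*s) := by
      rw [pow_mul]
      apply pow_le_pow_left₀ (by positivity)
      nlinarith
    have e3 : 4*K*(2*t*(s*(16*K^2*t)^s)) ≤ (s:ℝ) * ((4*K*t)^2 * (4*K*t)^(2*s)) := by
      have h8 : 8*K*(t:ℝ) ≤ (4*K*t)^2 := by nlinarith
      have hp0 : (0:ℝ) ≤ (16*K^2*t)^s := by positivity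
      have h9 : 4*K*(2*t*(s*(16*K^2*t)^s)) = (8*K*t) * ((s:ℝ) * (16*K^2*t)^s) := by ring
      rw [h9]
      have h10 : (8*K*t) * ((s:ℝ) * (16*K^2*t)^s) ≤ (4*K*t)^2 * ((s:ℝ) * (4*K*t)^(2*s)) := by
        apply mul_le_mul h8 _ (by positivity) (by positivity)
        apply mul_le_mul_of_nonneg_left e2 (by positivity)
      linarith [h10]
    have e4 : (s:ℝ) * ((4*K*t)^2 * (4*K*t)^(2*s)) = (s:ℝ) * (4*K*t)^(2*s+2) := by
      rw [pow_add]; ring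
    have e5 : (s:ℝ) * (4*K*t)^(2*s+2) ≤ (s:ℝ)^3 * (4*K*t)^(6*s) := by
      have h11 : (4*K*t)^(2*s+2) ≤ (4*K*t)^(6*s) := pow_le_pow_right₀ hA1 (by omega)
      have h12 : (s:ℝ) ≤ (s:ℝ)^3 := by
        have hss : (1:ℝ) ≤ (s:ℝ)^2 := by nlinarith
        calc (s:ℝ) = s * 1 := (mul_one _).symm
        _ ≤ (s:ℝ) * (s:ℝ)^2 := mul_le_mul_of_nonneg_left hss hs0.le
        _ = (s:ℝ)^3 := by ring
      have h13 : (0:ℝ) ≤ (4*K*t)^(2*s+2) := by positivity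
      exact mul_le_mul h12 h11 h13 (by positivity)
    have e0 := mul_le_mul_of_nonneg_left e1 (by linarith : (0:ℝ) ≤ 4*K)
    calc 4 * K * ((t:ℝ) + t * (s * (16*K^2*t)^s))
        ≤ 4 * K * (2 * t * (s * (16*K^2*t)^s)) := e0
    _ ≤ (s:ℝ) * ((4*K*t)^2 * (4*K*t)^(2*s)) := e3
    _ = (s:ℝ) * (4*K*t)^(2*s+2) := e4
    _ ≤ (s:ℝ)^3 * (4*K*t)^(6*s) := e5
    _ = (4*K*t)^(6*s) * (s:ℝ)^3 := by ring
    _ ≤ d := hd2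
  have hm : (t:ℝ) * (d / (4*K*t)) = d / (4*K) := by
    field_simp
  rw [hm]
  have hsplit : d / K = d/(4*K) + (d/(4*K) + d/(2*K)) := by
    field_simp
    ring
  rw [hsplit]
  have : (t:ℝ) + t * (s * (16*K^2*t)^s) ≤ d/(4*K) := by
    rw [le_div_iff₀ (by linarith : (0:ℝ) < 4*K)]
    calc ((t:ℝ) + t * (s * (16*K^2*t)^s)) * (4*K)
        = 4*K*((t:ℝ) + t * (s * (16*K^2*t)^s)) := by ring
    _ ≤ d := key
  linarith


end Aux

set_option maxHeartbeats 1000000 in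
theorem stmt_2 {V : Type*} [Fintype V] (G : SimpleGraph V) (s t : ℕ) (hs : 2 ≤ s)
    (K : ℝ) (hK : 1 < K) (T : SimpleGraph (Fin t)) (hT : T.IsTree)
    (hreg : ∀ u v : V, ((G.neighborSet u).ncard : ℝ) ≤ K * (G.neighborSet v).ncard)
    (hfree : KssFree s G) (d : ℝ)
    (hd : d = 2 * G.edgeSet.ncard / Fintype.card V)
    (hd2 : (4 * K * t) ^ (6 * s) * s ^ 3 ≤ d) :
    (Fintype.card V : ℝ) * (d / (2 * K)) ^ (t - 1) ≤ Nat.card (T ↪g G) := by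
  classical
  have hne : Nonempty (Fin t) := hT.isConnected.nonempty
  have ht : 0 < t := Fin.pos_iff_nonempty.mpr hne
  have ht1 : (1:ℝ) ≤ t := by exact_mod_cast ht
  have hs2 : (2:ℝ) ≤ s := by exact_mod_cast hs
  have hK0 : (0:ℝ) < K := by linarith
  have hA0 : (0:ℝ) < 4*K*t := by nlinarith
  obtain ⟨hd0, hcq4s, harith⟩ := arith_main hs ht hK hd2
  have hn0 : 0 < Fintype.card V := by
    rcases Nat.eq_zero_or_pos (Fintype.card V) with h0 | h
    · rw [h0] at hd
      simp at hd
      rw [hd] at hd0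
      exact absurd hd0 (lt_irrefl 0)
    · exact h
  -- neighborSet ncard = degree
  have hdeg_ncard : ∀ u : V, (G.neighborSet u).ncard = G.degree u := by
    intro u
    rw [Set.ncard_eq_toFinset_card', Set.toFinset_card,
      SimpleGraph.card_neighborSet_eq_degree]
  have hreg' : ∀ u v : V, (G.degree u : ℝ) ≤ K * G.degree v := by
    intro u v
    have := hreg u v
    rwa [hdeg_ncard, hdeg_ncard] at this
  -- degree sum
  have hecard : G.edgeSet.ncard = G.edgeFinset.card := by
    rw [Set.ncard_eq_toFinset_card']
    simp [SimpleGraph.edgeFinset]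
  have hsum : ∑ v : V, (G.degree v : ℝ) = Fintype.card V * d := by
    have h2e : ∑ v : V, G.degree v = 2 * G.edgeFinset.card :=
      SimpleGraph.sum_degrees_eq_twice_card_edges G
    have hnne : (Fintype.card V : ℝ) ≠ 0 := by positivity
    have hnd : (Fintype.card V : ℝ) * d = 2 * G.edgeFinset.card := by
      rw [hd, hecard]
      field_simp
    calc ∑ v : V, (G.degree v : ℝ) = ((∑ v : V, G.degree v : ℕ) : ℝ) := by push_cast; rfl
    _ = ((2 * G.edgeFinset.card : ℕ) : ℝ) := by rw [h2e]
    _ = Fintype.card V * d := by push_cast; linarith [hnd]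
  have hVne : Nonempty V := Fintype.card_pos_iff.mp hn0
  have huniv_ne : (univ : Finset V).Nonempty := univ_nonempty
  have hex_low : ∀ v : V, d ≤ K * G.degree v := by
    have hmax : ∃ u : V, d ≤ G.degree u := by
      by_contra hcon
      push_neg at hcon
      have hlt : ∑ v : V, (G.degree v : ℝ) < ∑ _v : V, d :=
        Finset.sum_lt_sum_of_nonempty huniv_ne (fun v _ => hcon v)
      rw [hsum, Finset.sum_const, Finset.card_univ, nsmul_eq_mul] at hlt
      exact absurd hlt (lt_irrefl _)
    obtain ⟨u, hu⟩ := hmax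
    intro v
    exact le_trans hu (hreg' u v)
  have hdegU : ∀ v : V, (G.degree v : ℝ) ≤ K * d := by
    have hmin : ∃ u : V, (G.degree u : ℝ) ≤ d := by
      by_contra hcon
      push_neg at hcon
      have hlt : ∑ _v : V, d < ∑ v : V, (G.degree v : ℝ) :=
        Finset.sum_lt_sum_of_nonempty huniv_ne (fun v _ => hcon v)
      rw [hsum, Finset.sum_const, Finset.card_univ, nsmul_eq_mul] at hlt
      exact absurd hlt (lt_irrefl _)
    obtain ⟨u, hu⟩ := hmin
    intro v
    calc (G.degree v : ℝ) ≤ K * G.degree u := hreg' v u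
    _ ≤ K * d := by nlinarith
  obtain ⟨σ, hσ⟩ := tree_order T hT
  set cq := d / (4*K*t) with hcqdef
  set m := ⌊cq⌋₊ with hmdef
  set Br := (s:ℝ) * (16*K^2*t)^s with hBrdef
  set c := d / (2*K) with hcdef
  have hcqpos : 0 < cq := div_pos hd0 hA0
  have hmlecq : (m:ℝ) ≤ cq := Nat.floor_le hcqpos.le
  have hmgecq : cq - 1 < (m:ℝ) := Nat.sub_one_lt_floor cq
  have hs_le_m : s ≤ m := by
    have : (s:ℝ) ≤ (m:ℝ) := by linarith
    exact_mod_cast this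
  -- the bad-set bound
  have hBr : ∀ u : V, ((badF G m u).card : ℝ) ≤ Br := by
    intro u
    have hb := bad_card G (le_trans one_le_two hs) hfree m u
    have hsm1 : s ≤ m + 1 := le_trans hs_le_m (Nat.le_succ m)
    have hbR : ((badF G m u).card : ℝ) * ((m:ℝ)+1-s)^s ≤ s * (G.degree u:ℝ)^s := by
      have hb' := (Nat.cast_le (α := ℝ)).mpr hb
      push_cast [Nat.cast_sub hsm1] at hb'
      convert hb' using 3 <;> rfl
    have hq2 : cq / 2 ≤ (m:ℝ)+1-s := by linarith
    have hq0 : (0:ℝ) < (m:ℝ)+1-s := lt_of_lt_of_le (by linarith) hq2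
    have hKd : (G.degree u : ℝ) ≤ K * d := hdegU u
    have hfrac : ((badF G m u).card : ℝ) ≤ (s:ℝ) * ((G.degree u:ℝ)/((m:ℝ)+1-s))^s := by
      rw [div_pow, ← mul_div_assoc, le_div_iff₀ (by positivity)]
      exact hbR
    have hdivle : (G.degree u:ℝ)/((m:ℝ)+1-s) ≤ (K*d)/(cq/2) :=
      div_le_div₀ (by positivity) hKd (by linarith) hq2
    have hfe : (K*d)/(cq/2) = 8*K^2*t := by
      rw [hcqdef]
      have htne : (t:ℝ) ≠ 0 := by positivity
      field_simp
      ring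
    have hstep : ((badF G m u).card : ℝ) ≤ (s:ℝ) * (8*K^2*t)^s := by
      calc ((badF G m u).card : ℝ) ≤ (s:ℝ) * ((G.degree u:ℝ)/((m:ℝ)+1-s))^s := hfrac
      _ ≤ (s:ℝ) * ((K*d)/(cq/2))^s := by
          apply mul_le_mul_of_nonneg_left _ (by positivity)
          exact pow_le_pow_left₀ (by positivity) hdivle s
      _ = (s:ℝ) * (8*K^2*t)^s := by rw [hfe]
    calc ((badF G m u).card : ℝ) ≤ (s:ℝ) * (8*K^2*t)^s := hstep
    _ ≤ Br := by
        rw [hBrdef]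
        apply mul_le_mul_of_nonneg_left _ (by positivity)
        apply pow_le_pow_left₀ (by positivity)
        nlinarith
  have hdeggreedy : ∀ v : V, (t:ℝ) + t*m + t*Br + c ≤ G.degree v := by
    intro v
    have h1 : d ≤ K * G.degree v := hex_low v
    have h2 : d / K ≤ G.degree v := by
      rw [div_le_iff₀ hK0]
      linarith [h1, mul_comm K ((G.degree v : ℝ))]
    have h3 : (t:ℝ)*m ≤ t*cq := mul_le_mul_of_nonneg_left hmlecq (Nat.cast_nonneg t)
    calc (t:ℝ) + t*m + t*Br + c ≤ (t:ℝ) + t*cq + t*Br + c := by linarith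
    _ ≤ d/K := harith
    _ ≤ G.degree v := h2
  have hc0 : 0 ≤ c := le_of_lt (div_pos hd0 (by linarith))
  have hgreedy := greedy G T σ hσ m Br c hc0 hBr hdeggreedy t ht le_rfl
  set A := okset G T σ m t le_rfl with hAdef
  have hfin : Finite (T ↪g G) :=
    Finite.of_injective (fun e => (e : Fin t → V)) DFunLike.coe_injective
  have hok : ∀ f ∈ A, ok G T σ m t le_rfl f := fun f hf => mem_okset.mp hf
  let Φ : {f // f ∈ A} → (T ↪g G) := fun fp =>
    { toFun := fun a => fp.1 (σ.symm a),
      inj' := (hok fp.1 fp.2).1.comp σ.symm.injective,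
      map_rel_iff' := by
        intro a b
        simp only [Function.Embedding.coeFn_mk]
        rw [(hok fp.1 fp.2).2.1 (σ.symm a) (σ.symm b)]
        simp }
  have hΦinj : Function.Injective Φ := by
    intro f1 f2 h
    apply Subtype.ext
    funext i
    have := congrArg (fun e : T ↪g G => e (σ i)) h
    simpa [Φ, Equiv.symm_apply_apply] using this
  have hcard2 : (A.card : ℝ) ≤ (Nat.card (T ↪g G) : ℝ) := by
    have h := Nat.card_le_card_of_injective Φ hΦinj
    have hn : Nat.card {f // f ∈ A} = A.card := Nat.card_eq_finsetCard A
    rw [hn] at h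
    exact_mod_cast h
  calc (Fintype.card V : ℝ) * c ^ (t - 1) ≤ (A.card : ℝ) := hgreedy
  _ ≤ (Nat.card (T ↪g G) : ℝ) := hcard2
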